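/- Let q be a prime power and m > 7. Let α be a primitive element of F_{q^m} (a generator of the multiplicative group F_{q^m}^*), and let γ ∈ F_q with γ ≠ 0 be such that, in F_{q^m}, γ ≠ (α^{q^s} + α)·(α^{2q^s} + α^{q^s + 1} + α²) for every integer s with 0 < s < m and gcd(s, m) = 1. Let C ⊆ F_{q^m}^5 be the F_{q^m}-span of the two vectors (1, 0, α, α², α³) and (0, 1, α², α⁴, γα). Then C is an MRD code of dimension 2 (its minimum rank distance is 4), and C is not a generalized Gabidulin code: there exist no integer s with gcd(s, m) = 1 and no g_1, …, g_5 ∈ F_{q^m} linearly independent over F_q such that C equals the F_{q^m}-span of (g_1, …, g_5) and (g_1^{q^s}, …, g_5^{q^s}). -/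

import Mathlib

open Matrix

/-- The rank over the subfield `Fq` of a vector with entries in `K`:
the `Fq`-dimension of the `Fq`-span of its coordinates. -/
noncomputable def rankQ (Fq : Type) {K : Type} [Field Fq] [Field K] [Algebra Fq K] {n : ℕ}
    (v : Fin n → K) : ℕ :=
  Module.finrank Fq (Submodule.span Fq (Set.range v))

/-- The minimum rank distance of a linear rank-metric code `C ⊆ K^n`. -/
noncomputable def minRankDist (Fq : Type) {K : Type} [Field Fq] [Field K] [Algebra Fq K] {n : ℕ}
    (C : Submodule K (Fin n → K)) : ℕ :=
  sInf (rankQ Fq '' {c : Fin n → K | c ∈ C ∧ c ≠ 0})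

/-- A linear code `C ⊆ K^n` of dimension `k` over `K` is MRD if its minimum
rank distance equals `n - k + 1`. -/
def IsMRD (Fq : Type) {K : Type} [Field Fq] [Field K] [Algebra Fq K] {n : ℕ}
    (C : Submodule K (Fin n → K)) (k : ℕ) : Prop :=
  Module.finrank K C = k ∧ minRankDist Fq C = n - k + 1

/-- `G` is a generator matrix of `C`: its rows form a `K`-basis of `C`. -/
def IsGenMat {K : Type} [Field K] {k n : ℕ} (C : Submodule K (Fin n → K))
    (G : Matrix (Fin k) (Fin n) K) : Prop :=
  LinearIndependent K (fun i => G i) ∧ Submodule.span K (Set.range fun i => G i) = C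

set_option linter.unusedSectionVars false

section Aux

variable {q m : ℕ} {Fq K : Type} [Field Fq] [Fintype Fq] [Field K] [Fintype K] [Algebra Fq K]

lemma aux_two_le_q (hq : Fintype.card Fq = q) : 2 ≤ q := by
  rw [← hq]; exact Fintype.one_lt_card

lemma aux_findim : Module.Finite Fq K := Module.finite_iff_finite.mpr inferInstance

lemma aux_finrank (hq : Fintype.card Fq = q) (hK : Fintype.card K = q ^ m) :
    Module.finrank Fq K = m := by
  haveI : Module.Finite Fq K := aux_findim
  have h := Module.card_eq_pow_finrank (K := Fq) (V := K)
  rw [hq, hK] at h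
  exact (Nat.pow_right_injective (aux_two_le_q hq) h.symm)

lemma aux_pow_indep (hq : Fintype.card Fq = q) (hK : Fintype.card K = q ^ m)
    {k : ℕ} (hkm : k ≤ m) (α : K) (hα : ∀ x : K, x ≠ 0 → ∃ i : ℕ, x = α ^ i) :
    LinearIndependent Fq (fun i : Fin k => α ^ (i : ℕ)) := by
  haveI : Module.Finite Fq K := aux_findim
  have hint : IsIntegral Fq α := IsIntegral.of_finite Fq α
  have htop : IntermediateField.adjoin Fq {α} = ⊤ := by
    rw [eq_top_iff]
    rintro x -
    by_cases hx : x = 0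
    · subst hx; exact zero_mem _
    · obtain ⟨i, rfl⟩ := hα x hx
      exact pow_mem (IntermediateField.mem_adjoin_simple_self Fq α) i
  have hdeg : (minpoly Fq α).natDegree = m := by
    have h1 := IntermediateField.adjoin.finrank hint
    rw [htop, IntermediateField.finrank_top', aux_finrank hq hK] at h1
    exact h1.symm
  have h := linearIndependent_pow (K := Fq) (S := K) α
  rw [hdeg] at h
  exact h.comp (Fin.castLE hkm) (Fin.castLE_injective hkm)

lemma aux_card_pow (hK : Fintype.card K = q ^ m) (x : K) (t : ℕ) :
    x ^ (q ^ m) ^ t = x := by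
  induction t with
  | zero => simp
  | succ n ih => rw [pow_succ, pow_mul, ih, ← hK, FiniteField.pow_card]

lemma aux_pow_mod (hK : Fintype.card K = q ^ m) (x : K) (s : ℕ) :
    x ^ q ^ s = x ^ q ^ (s % m) := by
  conv_lhs => rw [show s = m * (s / m) + s % m from (Nat.div_add_mod s m).symm]
  rw [pow_add, pow_mul x, pow_mul q, aux_card_pow hK]

lemma aux_add_pow (hq : Fintype.card Fq = q) (s : ℕ) (x y : K) :
    (x + y) ^ q ^ s = x ^ q ^ s + y ^ q ^ s := by
  obtain ⟨n, hp, hcard⟩ := FiniteField.card Fq (ringChar Fq)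
  haveI : CharP K (ringChar Fq) :=
    charP_of_injective_ringHom (algebraMap Fq K).injective _
  haveI : Fact (Nat.Prime (ringChar Fq)) := ⟨hp⟩
  have hqs : q ^ s = (ringChar Fq) ^ ((n : ℕ) * s) := by
    rw [pow_mul, ← hcard, hq]
  rw [hqs]
  exact add_pow_char_pow (x := x) (y := y) _ _

lemma aux_gamma_fix (hq : Fintype.card Fq = q) (c : Fq) (s : ℕ) :
    (algebraMap Fq K c) ^ q ^ s = algebraMap Fq K c := by
  induction s with
  | zero => simp
  | succ n ih => rw [pow_succ, pow_mul, ih, ← map_pow, ← hq, FiniteField.pow_card]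

lemma aux_beta_ne (hq : Fintype.card Fq = q) (hK : Fintype.card K = q ^ m)
    (hm : 7 < m) (α : K) (hα : ∀ x : K, x ≠ 0 → ∃ i : ℕ, x = α ^ i)
    (r : ℕ) (hr0 : 0 < r) (hrm : r < m) : α ^ q ^ r ≠ α := by
  have hq2 : 2 ≤ q := aux_two_le_q hq
  intro hβ
  have hx : ∃ x : K, x ≠ 0 ∧ x ≠ 1 := by
    by_contra h
    push_neg at h
    have hsurj : Function.Surjective (fun b : Bool => if b then (1 : K) else 0) := by
      intro y
      by_cases hy : y = 0
      · exact ⟨false, by simp [hy]⟩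
      · exact ⟨true, by simp [h y hy]⟩
    have hle := Fintype.card_le_of_surjective _ hsurj
    have h2 : 2 ^ 1 < 2 ^ m := Nat.pow_lt_pow_right one_lt_two (by omega)
    have h3 : 2 ^ m ≤ q ^ m := Nat.pow_le_pow_left hq2 m
    rw [hK] at *
    simp [Fintype.card_bool] at hle
    omega
  obtain ⟨x, hx0, hx1⟩ := hx
  have hα0 : α ≠ 0 := by
    rintro rfl
    obtain ⟨i, hi⟩ := hα x hx0
    cases i with
    | zero => rw [pow_zero] at hi; exact hx1 hi
    | succ n => rw [zero_pow (Nat.succ_ne_zero n)] at hi; exact hx0 hi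
  set u : Kˣ := Units.mk0 α hα0 with hu
  have hford : ∀ y : Kˣ, y ∈ Subgroup.zpowers u := by
    intro y
    obtain ⟨i, hi⟩ := hα (y : K) (Units.ne_zero y)
    refine Subgroup.mem_zpowers_iff.mpr ⟨(i : ℤ), ?_⟩
    ext
    rw [zpow_natCast, Units.val_pow_eq_pow_val]
    exact hi.symm
  have hord := orderOf_eq_card_of_forall_mem_zpowers hford
  have hup : u ^ (q ^ r) = u := by
    ext
    rw [Units.val_pow_eq_pow_val]
    exact hβ
  have hpos : 1 ≤ q ^ r := Nat.one_le_pow _ _ (by omega)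
  have h1 : u ^ (q ^ r - 1) = 1 := by
    have h2 : u ^ (q ^ r - 1) * u = 1 * u := by
      rw [← pow_succ, Nat.sub_add_cancel hpos, hup, one_mul]
    exact mul_right_cancel h2
  have hdvd := orderOf_dvd_of_pow_eq_one h1
  rw [hord, Nat.card_units, Nat.card_eq_fintype_card, hK] at hdvd
  have hlt : q ^ r < q ^ m := Nat.pow_lt_pow_right (by omega) hrm
  have hge : 2 ≤ q ^ r := le_trans hq2 (Nat.le_self_pow (by omega) q)
  have hle := Nat.le_of_dvd (by omega) hdvd
  omega

lemma aux_minors {F : Type} [Field F] {γ : F} (hγ : γ ≠ 0) (u w : Fin 5 → F)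
    (e0 : u 0 * w 1 - w 0 * u 1 = 0)
    (e1 : γ * (u 0 * w 4 - w 0 * u 4) + (u 2 * w 1 - w 2 * u 1) = 0)
    (e2 : (u 0 * w 2 - w 0 * u 2) + γ * (u 2 * w 4 - w 2 * u 4) + (u 3 * w 1 - w 3 * u 1) = 0)
    (e3 : γ * (u 3 * w 4 - w 3 * u 4) + (u 4 * w 1 - w 4 * u 1) = 0)
    (e4 : (u 0 * w 3 - w 0 * u 3) + (u 3 * w 2 - w 3 * u 2) = 0)
    (e5 : (u 2 * w 3 - w 2 * u 3) + (u 4 * w 2 - w 4 * u 2) = 0)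
    (e7 : u 4 * w 3 - w 4 * u 3 = 0) :
    ∀ i j, u i * w j = u j * w i := by
  have p34 : u 3 * w 4 = u 4 * w 3 := by linear_combination -e7
  have p14 : u 1 * w 4 = u 4 * w 1 := by linear_combination -e3 + γ * p34
  have p04 : u 0 * w 4 = u 4 * w 0 := by
    have hsq : γ * (u 0 * w 4 - u 4 * w 0) * (u 0 * w 4 - u 4 * w 0) = 0 := by
      linear_combination (u 0 * w 2 - u 2 * w 0) * p14 - (u 2 * w 4 - u 4 * w 2) * e0 +
        (u 0 * w 4 - u 4 * w 0) * e1
    rcases mul_eq_zero.mp hsq with h | h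
    · rcases mul_eq_zero.mp h with h' | h'
      · exact absurd h' hγ
      · exact sub_eq_zero.mp h'
    · linear_combination h
  have p12 : u 1 * w 2 = u 2 * w 1 := by linear_combination -e1 + γ * p04
  have p03 : u 0 * w 3 = u 3 * w 0 := by
    have hsq : (u 0 * w 3 - u 3 * w 0) * (u 0 * w 3 - u 3 * w 0) = 0 := by
      linear_combination (u 0 * w 2 - u 2 * w 0) * p34 + (u 2 * w 3 - u 3 * w 2) * p04 +
        (u 0 * w 3 - u 3 * w 0) * (e4 + e5)
    linear_combination mul_self_eq_zero.mp hsq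
  have p23 : u 2 * w 3 = u 3 * w 2 := by linear_combination -e4 + p03
  have p24 : u 2 * w 4 = u 4 * w 2 := by linear_combination -e5 + p23
  have p02 : u 0 * w 2 = u 2 * w 0 := by
    have hsq : (u 0 * w 2 - u 2 * w 0) * (u 0 * w 2 - u 2 * w 0) = 0 := by
      linear_combination (u 2 * w 3 - u 3 * w 2) * e0 + (u 1 * w 2 - u 2 * w 1) * p03 -
        γ * (u 0 * w 2 - u 2 * w 0) * p24 + (u 0 * w 2 - u 2 * w 0) * e2
    linear_combination mul_self_eq_zero.mp hsq
  have p13 : u 1 * w 3 = u 3 * w 1 := by linear_combination -e2 + p02 + γ * p24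
  have p01 : u 0 * w 1 = u 1 * w 0 := by linear_combination e0
  intro i j
  fin_cases i <;> fin_cases j <;>
    first
      | rfl
      | exact p01 | exact p01.symm
      | exact p02 | exact p02.symm
      | exact p03 | exact p03.symm
      | exact p04 | exact p04.symm
      | exact p12 | exact p12.symm
      | exact p13 | exact p13.symm
      | exact p14 | exact p14.symm
      | exact p23 | exact p23.symm
      | exact p24 | exact p24.symm
      | exact p34 | exact p34.symm

lemma aux_eight {α : K}
    (hind : LinearIndependent Fq (fun i : Fin 8 => α ^ (i : ℕ)))
    (c0 c1 c2 c3 c4 c5 c6 c7 : Fq)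
    (h : algebraMap Fq K c0 + algebraMap Fq K c1 * α + algebraMap Fq K c2 * α ^ 2 +
        algebraMap Fq K c3 * α ^ 3 + algebraMap Fq K c4 * α ^ 4 +
        algebraMap Fq K c5 * α ^ 5 + algebraMap Fq K c6 * α ^ 6 +
        algebraMap Fq K c7 * α ^ 7 = 0) :
    c0 = 0 ∧ c1 = 0 ∧ c2 = 0 ∧ c3 = 0 ∧ c4 = 0 ∧ c5 = 0 ∧ c6 = 0 ∧ c7 = 0 := by
  have key := Fintype.linearIndependent_iff.mp hind ![c0, c1, c2, c3, c4, c5, c6, c7] ?_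
  · refine ⟨key 0, key 1, key 2, key 3, key 4, key 5, key 6, key 7⟩
  · rw [Fin.sum_univ_eight]
    simp only [Algebra.smul_def,
      show (![c0, c1, c2, c3, c4, c5, c6, c7] : Fin 8 → Fq) 0 = c0 from rfl,
      show (![c0, c1, c2, c3, c4, c5, c6, c7] : Fin 8 → Fq) 1 = c1 from rfl,
      show (![c0, c1, c2, c3, c4, c5, c6, c7] : Fin 8 → Fq) 2 = c2 from rfl,
      show (![c0, c1, c2, c3, c4, c5, c6, c7] : Fin 8 → Fq) 3 = c3 from rfl,
      show (![c0, c1, c2, c3, c4, c5, c6, c7] : Fin 8 → Fq) 4 = c4 from rfl,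
      show (![c0, c1, c2, c3, c4, c5, c6, c7] : Fin 8 → Fq) 5 = c5 from rfl,
      show (![c0, c1, c2, c3, c4, c5, c6, c7] : Fin 8 → Fq) 6 = c6 from rfl,
      show (![c0, c1, c2, c3, c4, c5, c6, c7] : Fin 8 → Fq) 7 = c7 from rfl,
      show ((0 : Fin 8) : ℕ) = 0 from rfl, show ((1 : Fin 8) : ℕ) = 1 from rfl,
      show ((2 : Fin 8) : ℕ) = 2 from rfl, show ((3 : Fin 8) : ℕ) = 3 from rfl,
      show ((4 : Fin 8) : ℕ) = 4 from rfl, show ((5 : Fin 8) : ℕ) = 5 from rfl,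
      show ((6 : Fin 8) : ℕ) = 6 from rfl, show ((7 : Fin 8) : ℕ) = 7 from rfl]
    linear_combination h

end Aux

section MRDAux

variable {q m : ℕ} {Fq K : Type} [Field Fq] [Fintype Fq] [Field K] [Fintype K] [Algebra Fq K]

set_option maxHeartbeats 1000000 in
lemma aux_rank_ge (hq : Fintype.card Fq = q) (hK : Fintype.card K = q ^ m)
    (hm : 7 < m) (α : K) (hα : ∀ x : K, x ≠ 0 → ∃ i : ℕ, x = α ^ i)
    (γ : Fq) (hγ0 : γ ≠ 0) (a b : K) (hab : ¬(a = 0 ∧ b = 0)) :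
    4 ≤ rankQ Fq (a • ![1, 0, α, α ^ 2, α ^ 3] +
      b • ![0, 1, α ^ 2, α ^ 4, algebraMap Fq K γ * α]) := by
  haveI : Module.Finite Fq K := aux_findim
  by_contra hlt
  push_neg at hlt
  set φ := algebraMap Fq K with hφ
  set c : Fin 5 → K := a • ![1, 0, α, α ^ 2, α ^ 3] +
      b • ![0, 1, α ^ 2, α ^ 4, φ γ * α] with hc
  set L := Fintype.linearCombination Fq c with hLdef
  have hrk : Module.finrank Fq (LinearMap.range L) ≤ 3 := by
    rw [hLdef, Fintype.range_linearCombination]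
    rw [rankQ] at hlt
    omega
  have hrn := LinearMap.finrank_range_add_finrank_ker L
  rw [Module.finrank_fin_fun] at hrn
  have hker : 2 ≤ Module.finrank Fq (LinearMap.ker L) := by omega
  set bk := Module.finBasis Fq (LinearMap.ker L) with hbk
  set i0 : Fin (Module.finrank Fq (LinearMap.ker L)) := ⟨0, by omega⟩ with hi0
  set i1 : Fin (Module.finrank Fq (LinearMap.ker L)) := ⟨1, by omega⟩ with hi1
  set u : Fin 5 → Fq := (bk i0 : Fin 5 → Fq) with hu
  set w : Fin 5 → Fq := (bk i1 : Fin 5 → Fq) with hw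
  have hcj : ∀ j, c j = a * (![1, 0, α, α ^ 2, α ^ 3] j) +
      b * (![0, 1, α ^ 2, α ^ 4, φ γ * α] j) := by
    intro j; rw [hc]; simp only [Pi.add_apply, Pi.smul_apply, smul_eq_mul]
  have hkereq : ∀ (z : Fin 5 → Fq), z ∈ LinearMap.ker L →
      a * (φ (z 0) + φ (z 2) * α + φ (z 3) * α ^ 2 + φ (z 4) * α ^ 3)
      + b * (φ (z 1) + φ γ * φ (z 4) * α + φ (z 2) * α ^ 2 + φ (z 3) * α ^ 4) = 0 := by
    intro z hz
    rw [LinearMap.mem_ker, hLdef, Fintype.linearCombination_apply, Fin.sum_univ_five] at hz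
    simp only [hcj, Matrix.cons_val_zero, Matrix.cons_val_one, Matrix.head_cons,
      Matrix.cons_val_two, Matrix.tail_cons, Matrix.cons_val_three, Matrix.cons_val_four,
      Algebra.smul_def] at hz
    linear_combination hz
  have hFu := hkereq u (by rw [hu]; exact (bk i0).2)
  have hFw := hkereq w (by rw [hw]; exact (bk i1).2)
  set fu : K := φ (u 0) + φ (u 2) * α + φ (u 3) * α ^ 2 + φ (u 4) * α ^ 3 with hfu
  set gu : K := φ (u 1) + φ γ * φ (u 4) * α + φ (u 2) * α ^ 2 + φ (u 3) * α ^ 4 with hgu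
  set fw : K := φ (w 0) + φ (w 2) * α + φ (w 3) * α ^ 2 + φ (w 4) * α ^ 3 with hfw
  set gw : K := φ (w 1) + φ γ * φ (w 4) * α + φ (w 2) * α ^ 2 + φ (w 3) * α ^ 4 with hgw
  have hDa : a * (fu * gw - fw * gu) = 0 := by linear_combination gw * hFu - gu * hFw
  have hDb : b * (fu * gw - fw * gu) = 0 := by linear_combination fu * hFw - fw * hFu
  have hD : fu * gw - fw * gu = 0 := by
    rcases not_and_or.mp hab with ha | hb
    · exact (mul_eq_zero.mp hDa).resolve_left ha
    · exact (mul_eq_zero.mp hDb).resolve_left hb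
  obtain ⟨q0, q1, q2, q3, q4, q5, -, q7⟩ :=
    aux_eight (aux_pow_indep hq hK (by omega) α hα)
      (u 0 * w 1 - w 0 * u 1)
      (γ * (u 0 * w 4 - w 0 * u 4) + (u 2 * w 1 - w 2 * u 1))
      ((u 0 * w 2 - w 0 * u 2) + γ * (u 2 * w 4 - w 2 * u 4) + (u 3 * w 1 - w 3 * u 1))
      (γ * (u 3 * w 4 - w 3 * u 4) + (u 4 * w 1 - w 4 * u 1))
      ((u 0 * w 3 - w 0 * u 3) + (u 3 * w 2 - w 3 * u 2))
      ((u 2 * w 3 - w 2 * u 3) + (u 4 * w 2 - w 4 * u 2))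
      (u 4 * w 4 - w 4 * u 4)
      (u 4 * w 3 - w 4 * u 3)
      (by
        simp only [map_add, map_sub, _root_.map_mul]
        rw [hfu, hgu, hfw, hgw] at hD
        linear_combination hD)
  have minors := aux_minors hγ0 u w q0 q1 q2 q3 q4 q5 q7
  have hune : u ≠ 0 := by
    intro h
    exact bk.ne_zero i0 (by rw [← Submodule.coe_eq_zero, ← hu]; exact h)
  obtain ⟨j0, hj0⟩ : ∃ j, u j ≠ 0 := by
    by_contra h; push_neg at h; exact hune (funext h)
  have hdep : bk i1 = (w j0 / u j0) • bk i0 := by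
    apply Subtype.ext
    rw [Submodule.coe_smul, ← hu, ← hw]
    funext j
    have hm := minors j0 j
    rw [Pi.smul_apply, smul_eq_mul]
    field_simp
    linear_combination hm
  have hne01 : i0 ≠ i1 := by
    rw [hi0, hi1]
    intro hcon
    exact absurd (congrArg Fin.val hcon) (by norm_num)
  have hccl := congrArg (fun z => bk.repr z i1) hdep
  simp only [Module.Basis.repr_self, _root_.map_smul, Finsupp.smul_apply,
    Finsupp.single_eq_same, Finsupp.single_eq_of_ne' hne01, smul_eq_mul, mul_zero] at hccl
  exact one_ne_zero hccl

end MRDAux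


set_option maxHeartbeats 1000000

/-- for `m > 7`, a primitive `α ∈ F_{q^m}` and `0 ≠ γ ∈ F_q` with
`γ ≠ (α^{q^s} + α)(α^{2q^s} + α^{q^s+1} + α²)` for all `0 < s < m` with `gcd(s,m) = 1`,
the code spanned by `(1, 0, α, α², α³)` and `(0, 1, α², α⁴, γα)` is MRD of dimension 2
but not a generalized Gabidulin code. -/
theorem stmt17 {q m : ℕ} (Fq K : Type) [Field Fq] [Fintype Fq] [Field K] [Fintype K]
    [Algebra Fq K] (hq : Fintype.card Fq = q) (hK : Fintype.card K = q ^ m)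
    (hm : 7 < m)
    (α : K) (hα : ∀ x : K, x ≠ 0 → ∃ i : ℕ, x = α ^ i)
    (γ : Fq) (hγ0 : γ ≠ 0)
    (hγ : ∀ s : ℕ, 0 < s → s < m → Nat.gcd s m = 1 →
      algebraMap Fq K γ ≠
        (α ^ q ^ s + α) * (α ^ (2 * q ^ s) + α ^ (q ^ s + 1) + α ^ 2))
    (C : Submodule K (Fin 5 → K))
    (hC : C = Submodule.span K
      ({![1, 0, α, α ^ 2, α ^ 3],
        ![0, 1, α ^ 2, α ^ 4, algebraMap Fq K γ * α]} : Set (Fin 5 → K))) :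
    IsMRD Fq C 2 ∧
      ¬ ∃ (s : ℕ) (g : Fin 5 → K), Nat.gcd s m = 1 ∧ LinearIndependent Fq g ∧
        C = Submodule.span K
          ({(fun j => g j), (fun j => (g j) ^ q ^ s)} : Set (Fin 5 → K)) := by
  have hq2 : 2 ≤ q := aux_two_le_q hq
  set v1 : Fin 5 → K := ![1, 0, α, α ^ 2, α ^ 3] with hv1
  set v2 : Fin 5 → K := ![0, 1, α ^ 2, α ^ 4, algebraMap Fq K γ * α] with hv2
  constructor
  · constructor
    · -- dimension 2
      have hrange : Set.range ![v1, v2] = ({v1, v2} : Set (Fin 5 → K)) := by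
        ext x
        constructor
        · rintro ⟨i, rfl⟩
          fin_cases i
          · exact Set.mem_insert _ _
          · exact Set.mem_insert_of_mem _ rfl
        · rintro (rfl | rfl)
          · exact ⟨0, rfl⟩
          · exact ⟨1, rfl⟩
      have hpair : LinearIndependent K ![v1, v2] := by
        rw [LinearIndependent.pair_iff]
        intro s t h
        constructor
        · have h0 := congrFun h 0
          simpa [hv1, hv2] using h0
        · have h1 := congrFun h 1
          simpa [hv1, hv2] using h1
      rw [hC, ← hrange, finrank_span_eq_card hpair]
      simp
    · -- minimum rank distance
      have hrank_v1 : rankQ Fq v1 = 4 := by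
        have hspan : Submodule.span Fq (Set.range v1) =
            Submodule.span Fq (Set.range (fun i : Fin 4 => α ^ (i : ℕ))) := by
          apply le_antisymm <;> rw [Submodule.span_le]
          · rintro x ⟨i, rfl⟩
            fin_cases i
            · exact Submodule.subset_span ⟨⟨0, by norm_num⟩, by simp [hv1]⟩
            · show v1 1 ∈ _
              rw [hv1]
              simp only [Matrix.cons_val_one, Matrix.head_cons]
              exact Submodule.zero_mem _
            · exact Submodule.subset_span ⟨⟨1, by norm_num⟩, by simp [hv1]⟩
            · exact Submodule.subset_span ⟨⟨2, by norm_num⟩, by simp [hv1]⟩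
            · exact Submodule.subset_span ⟨⟨3, by norm_num⟩, by simp [hv1]⟩
          · rintro x ⟨i, rfl⟩
            fin_cases i
            · exact Submodule.subset_span ⟨0, by simp [hv1]⟩
            · exact Submodule.subset_span ⟨2, by simp [hv1]⟩
            · exact Submodule.subset_span ⟨3, by simp [hv1]⟩
            · exact Submodule.subset_span ⟨4, by simp [hv1]⟩
        rw [rankQ, hspan, finrank_span_eq_card (aux_pow_indep hq hK (by omega) α hα)]
        simp
      have hv1C : v1 ∈ C := by
        rw [hC]; exact Submodule.subset_span (Set.mem_insert _ _)
      have hv1ne : v1 ≠ 0 := by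
        intro h
        have h0 := congrFun h 0
        rw [hv1] at h0
        simp at h0
      have hmem4 : (4 : ℕ) ∈ rankQ Fq '' {c : Fin 5 → K | c ∈ C ∧ c ≠ 0} :=
        ⟨v1, ⟨hv1C, hv1ne⟩, hrank_v1⟩
      have hlb : ∀ x ∈ rankQ Fq '' {c : Fin 5 → K | c ∈ C ∧ c ≠ 0}, 4 ≤ x := by
        rintro x ⟨c, ⟨hcC, hc0⟩, rfl⟩
        rw [hC, Submodule.mem_span_pair] at hcC
        obtain ⟨a, b, hab⟩ := hcC
        rw [← hab, hv1, hv2]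
        apply aux_rank_ge hq hK hm α hα γ hγ0
        rintro ⟨rfl, rfl⟩
        apply hc0
        rw [← hab]
        simp
      rw [minRankDist]
      norm_num
      exact le_antisymm (Nat.sInf_le hmem4) (le_csInf ⟨4, hmem4⟩ hlb)
  · -- not a generalized Gabidulin code
    rintro ⟨s, g, hgcd, hgli, hgab⟩
    set r := s % m with hr
    have hgcdr : Nat.gcd r m = 1 := by
      rw [hr, ← Nat.gcd_rec, Nat.gcd_comm]; exact hgcd
    have hr0 : 0 < r := by
      rcases Nat.eq_zero_or_pos r with h0 | h0
      · rw [h0, Nat.gcd_zero_left] at hgcdr; omega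
      · exact h0
    have hrm : r < m := Nat.mod_lt _ (by omega)
    have hβne : α ^ q ^ r ≠ α := aux_beta_ne hq hK hm α hα r hr0 hrm
    have hmod : ∀ x : K, x ^ q ^ s = x ^ q ^ r := by
      intro x; rw [hr]; exact aux_pow_mod hK x s
    have hpow : ∀ x y : K, (x + y) ^ q ^ r = x ^ q ^ r + y ^ q ^ r :=
      fun x y => aux_add_pow hq r x y
    have hqr0 : q ^ r ≠ 0 := by positivity
    have hg1 : g ∈ C := by
      rw [hgab]; exact Submodule.subset_span (Set.mem_insert _ _)
    have hg2 : (fun j => (g j) ^ q ^ s) ∈ C := by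
      rw [hgab]; exact Submodule.subset_span (Set.mem_insert_of_mem _ rfl)
    rw [hC, Submodule.mem_span_pair] at hg1 hg2
    obtain ⟨a, b, hab⟩ := hg1
    obtain ⟨cc, dd, hcd⟩ := hg2
    have hg0 : g 0 = a := by
      have h := congrFun hab 0
      rw [hv1, hv2] at h
      simp only [Pi.add_apply, Pi.smul_apply, smul_eq_mul, Matrix.cons_val_zero,
        mul_one, mul_zero, add_zero] at h
      exact h.symm
    have hg1' : g 1 = b := by
      have h := congrFun hab 1
      rw [hv1, hv2] at h
      simp only [Pi.add_apply, Pi.smul_apply, smul_eq_mul, Matrix.cons_val_one,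
        Matrix.head_cons, Matrix.cons_val_zero, mul_one, mul_zero, zero_add] at h
      exact h.symm
    have hg2' : a * α + b * α ^ 2 = g 2 := by
      have h := congrFun hab 2
      rw [hv1, hv2] at h
      simpa only [Pi.add_apply, Pi.smul_apply, smul_eq_mul, Matrix.cons_val_two,
        Matrix.tail_cons, Matrix.head_cons] using h
    have hg4' : a * α ^ 3 + b * (algebraMap Fq K γ * α) = g 4 := by
      have h := congrFun hab 4
      rw [hv1, hv2] at h
      simpa only [Pi.add_apply, Pi.smul_apply, smul_eq_mul, Matrix.cons_val_four,
        Matrix.cons_val_succ, Matrix.cons_val_zero, Matrix.tail_cons,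
        Matrix.head_cons] using h
    have hcc : cc = a ^ q ^ r := by
      have h := congrFun hcd 0
      rw [hv1, hv2] at h
      simp only [Pi.add_apply, Pi.smul_apply, smul_eq_mul, Matrix.cons_val_zero,
        mul_one, mul_zero, add_zero] at h
      rw [hmod (g 0), hg0] at h
      exact h
    have hdd : dd = b ^ q ^ r := by
      have h := congrFun hcd 1
      rw [hv1, hv2] at h
      simp only [Pi.add_apply, Pi.smul_apply, smul_eq_mul, Matrix.cons_val_one,
        Matrix.head_cons, Matrix.cons_val_zero, mul_one, mul_zero, zero_add] at h
      rw [hmod (g 1), hg1'] at h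
      exact h
    have hE3 : a ^ q ^ r * α ^ q ^ r + b ^ q ^ r * (α ^ q ^ r) ^ 2
        = a ^ q ^ r * α + b ^ q ^ r * α ^ 2 := by
      have h := congrFun hcd 2
      rw [hv1, hv2] at h
      simp only [Pi.add_apply, Pi.smul_apply, smul_eq_mul, Matrix.cons_val_two,
        Matrix.tail_cons, Matrix.head_cons] at h
      rw [hmod (g 2), ← hg2', hpow, mul_pow, mul_pow, pow_right_comm α 2,
        hcc, hdd] at h
      exact h.symm
    have hE5 : a ^ q ^ r * (α ^ q ^ r) ^ 3 + b ^ q ^ r * (algebraMap Fq K γ * α ^ q ^ r)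
        = a ^ q ^ r * α ^ 3 + b ^ q ^ r * (algebraMap Fq K γ * α) := by
      have h := congrFun hcd 4
      rw [hv1, hv2] at h
      simp only [Pi.add_apply, Pi.smul_apply, smul_eq_mul, Matrix.cons_val_four,
        Matrix.cons_val_succ, Matrix.cons_val_zero, Matrix.tail_cons,
        Matrix.head_cons] at h
      rw [hmod (g 4), ← hg4', hpow, mul_pow, mul_pow, mul_pow, pow_right_comm α 3,
        aux_gamma_fix hq γ r, hcc, hdd] at h
      exact h.symm
    have hfac1 : (α ^ q ^ r - α) * (a ^ q ^ r + b ^ q ^ r * (α ^ q ^ r + α)) = 0 := by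
      linear_combination hE3
    have hAB : a ^ q ^ r = -b ^ q ^ r * (α ^ q ^ r + α) := by
      rcases mul_eq_zero.mp hfac1 with h | h
      · exact absurd (sub_eq_zero.mp h) hβne
      · linear_combination h
    have hfac2 : (α ^ q ^ r - α) *
        (a ^ q ^ r * ((α ^ q ^ r) ^ 2 + α * α ^ q ^ r + α ^ 2)
          + b ^ q ^ r * algebraMap Fq K γ) = 0 := by
      linear_combination hE5
    have hE5' : a ^ q ^ r * ((α ^ q ^ r) ^ 2 + α * α ^ q ^ r + α ^ 2)
        + b ^ q ^ r * algebraMap Fq K γ = 0 :=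
      (mul_eq_zero.mp hfac2).resolve_left (fun h => hβne (sub_eq_zero.mp h))
    have hBz : b ^ q ^ r * (algebraMap Fq K γ -
        (α ^ q ^ r + α) * ((α ^ q ^ r) ^ 2 + α * α ^ q ^ r + α ^ 2)) = 0 := by
      linear_combination hE5' - ((α ^ q ^ r) ^ 2 + α * α ^ q ^ r + α ^ 2) * hAB
    rcases mul_eq_zero.mp hBz with hB0 | hgeq
    · have hb : b = 0 := (pow_eq_zero_iff hqr0).mp hB0
      have hA0 : a ^ q ^ r = 0 := by rw [hAB, hB0]; ring
      have ha : a = 0 := (pow_eq_zero_iff hqr0).mp hA0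
      exact hgli.ne_zero 0 (by rw [hg0, ha])
    · apply hγ r hr0 hrm hgcdr
      have h2 : α ^ (2 * q ^ r) = (α ^ q ^ r) ^ 2 := by rw [mul_comm, pow_mul]
      have h1 : α ^ (q ^ r + 1) = α ^ q ^ r * α := pow_succ α (q ^ r)
      rw [h2, h1]
      linear_combination hgeq
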